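/- Lifting a Stanley basis to extra variables: Let R_{n+m} = K[x_1,…,x_n, y_1,…,y_m] with its standard grading, and let b_{11},…,b_{n,k_n} ∈ R_{n+m} be homogeneous elements such that deg(b_{ij}) = deg(b_{ij}(x,0)). If the specializations b_{ij}(x,0) ∈ K[x] form a basis of R_{n+m} over (R_{i+m})_{i=0}^n, then the b_{ij} themselves form a basis of R_{n+m} over (R_{i+m})_{i=0}^n. -/

import Mathlib

open MvPolynomial

/-- In `K[x_1,…,x_n,y_1,…,y_m]` (variables indexed by `Fin (n+m)`, the first
`n` being the `x`'s), `p` lies in the subring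
`R_{i+m} = K[x_{n-i+1},…,x_n,y_1,…,y_m]` iff every exponent occurring in `p`
vanishes on the variables of index `< n - i`. -/
def InLastXY {K : Type*} [CommSemiring K] {n m : ℕ} (i : ℕ)
    (p : MvPolynomial (Fin (n + m)) K) : Prop :=
  ∀ d ∈ p.support, ∀ j : Fin (n + m), (j : ℕ) < n - i → d j = 0

/-- The substitution `y = 0`: the `K`-algebra endomorphism of
`K[x_1,…,x_n,y_1,…,y_m]` sending each `x_j` to itself and each `y_j` to `0`. -/
noncomputable def evalY0 (K : Type*) [CommRing K] (n m : ℕ) :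
    MvPolynomial (Fin (n + m)) K →ₐ[K] MvPolynomial (Fin (n + m)) K :=
  aeval (fun j : Fin (n + m) => if (j : ℕ) < n then X j else 0)

open Finsupp

section Helpers

variable {R σ : Type*} [CommRing R]

lemma support_wcomp_subset (w : σ → ℕ) (t : ℕ) (p : MvPolynomial σ R) :
    (weightedHomogeneousComponent w t p).support ⊆ p.support := by
  intro d hd
  rw [MvPolynomial.mem_support_iff] at hd ⊢
  rw [coeff_weightedHomogeneousComponent] at hd
  intro h
  apply hd
  split <;> simp [h]

lemma isWH_of_support_subset {w : σ → ℕ} {e : ℕ} {p q : MvPolynomial σ R}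
    (hsub : q.support ⊆ p.support) (hp : p.IsWeightedHomogeneous w e) :
    q.IsWeightedHomogeneous w e := by
  intro d hd
  exact hp (MvPolynomial.mem_support_iff.mp (hsub (MvPolynomial.mem_support_iff.mpr hd)))

lemma wcomp_mul_wh {w : σ → ℕ} {b : MvPolynomial σ R} {e : ℕ}
    (hb : b.IsWeightedHomogeneous w e) (a : MvPolynomial σ R) (k : ℕ) :
    weightedHomogeneousComponent w (k + e) (a * b)
      = weightedHomogeneousComponent w k a * b := by
  induction a using MvPolynomial.induction_on' with
  | monomial d r =>
    by_cases hd : weight w d = k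
    · rw [IsWeightedHomogeneous.weightedHomogeneousComponent_same
        (((isWeightedHomogeneous_monomial w d r hd).mul hb)),
        IsWeightedHomogeneous.weightedHomogeneousComponent_same
        (isWeightedHomogeneous_monomial w d r hd)]
    · rw [IsWeightedHomogeneous.weightedHomogeneousComponent_ne _
        ((isWeightedHomogeneous_monomial w d r rfl).mul hb)
        (by omega : k + e ≠ weight w d + e),
        IsWeightedHomogeneous.weightedHomogeneousComponent_ne _
        (isWeightedHomogeneous_monomial w d r rfl) (Ne.symm hd), zero_mul]
  | add p q hp hq =>
    rw [add_mul, map_add, map_add, add_mul, hp, hq]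

lemma wcomp_mul_wh_lt {w : σ → ℕ} {b : MvPolynomial σ R} {e : ℕ}
    (hb : b.IsWeightedHomogeneous w e) (a : MvPolynomial σ R) {k : ℕ} (hk : k < e) :
    weightedHomogeneousComponent w k (a * b) = 0 := by
  induction a using MvPolynomial.induction_on' with
  | monomial d r =>
    exact IsWeightedHomogeneous.weightedHomogeneousComponent_ne _
      ((isWeightedHomogeneous_monomial w d r rfl).mul hb)
      (by omega : k ≠ weight w d + e)
  | add p q hp hq => rw [add_mul, map_add, hp, hq, add_zero]

/-- Truncation: remove all weighted components of weight `< k`. -/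
noncomputable def truncW (w : σ → ℕ) (k : ℕ) :
    MvPolynomial σ R →ₗ[R] MvPolynomial σ R :=
  LinearMap.id - ∑ t ∈ Finset.range k, weightedHomogeneousComponent w t

lemma coeff_truncW (w : σ → ℕ) (k : ℕ) (p : MvPolynomial σ R) (d : σ →₀ ℕ) :
    coeff d (truncW w k p) = if weight w d < k then 0 else coeff d p := by
  have : coeff d ((∑ t ∈ Finset.range k, weightedHomogeneousComponent w t) p)
      = if weight w d < k then coeff d p else 0 := by
    rw [LinearMap.sum_apply, coeff_sum]
    rw [show (if weight w d < k then coeff d p else 0)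
      = if weight w d ∈ Finset.range k then coeff d p else 0 by simp]
    rw [← Finset.sum_ite_eq' (Finset.range k) (weight w d)
      (fun _ => coeff d p)]
    refine Finset.sum_congr rfl fun t _ => ?_
    rw [coeff_weightedHomogeneousComponent]
    simp [eq_comm]
  rw [truncW, LinearMap.sub_apply, LinearMap.id_apply, coeff_sub, this]
  split <;> simp

lemma support_truncW_subset (w : σ → ℕ) (k : ℕ) (p : MvPolynomial σ R) :
    (truncW w k p).support ⊆ p.support := by
  intro d hd
  rw [MvPolynomial.mem_support_iff] at hd ⊢
  rw [coeff_truncW] at hd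
  intro h; apply hd; split <;> simp [h]

lemma minW_truncW (w : σ → ℕ) (k : ℕ) (p : MvPolynomial σ R) :
    ∀ d ∈ (truncW w k p).support, k ≤ weight w d := by
  intro d hd
  rw [MvPolynomial.mem_support_iff, coeff_truncW] at hd
  by_contra h
  exact hd (if_pos (by omega))

lemma truncW_eq_self {w : σ → ℕ} {k : ℕ} {p : MvPolynomial σ R}
    (h : ∀ d ∈ p.support, k ≤ weight w d) : truncW w k p = p := by
  ext d
  rw [coeff_truncW]
  split_ifs with hlt
  · by_contra hne
    exact absurd (h d (MvPolynomial.mem_support_iff.mpr fun h0 => hne h0.symm))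
      (by omega)
  · rfl

lemma truncW_mul_wh0 {w : σ → ℕ} {b : MvPolynomial σ R}
    (hb : b.IsWeightedHomogeneous w 0) (a : MvPolynomial σ R) (k : ℕ) :
    truncW w k (a * b) = truncW w k a * b := by
  simp only [truncW, LinearMap.sub_apply, LinearMap.id_apply, LinearMap.sum_apply]
  rw [sub_mul, Finset.sum_mul]
  congr 1
  refine Finset.sum_congr rfl fun t _ => ?_
  have := wcomp_mul_wh hb a t
  rwa [add_zero] at this

lemma minW_mul {w : σ → ℕ} {k l : ℕ} {a b : MvPolynomial σ R}
    (ha : ∀ d ∈ a.support, k ≤ weight w d) (hb : ∀ d ∈ b.support, l ≤ weight w d) :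
    ∀ d ∈ (a * b).support, k + l ≤ weight w d := by
  classical
  intro d hd
  obtain ⟨d1, h1, d2, h2, rfl⟩ := Finset.mem_add.mp (MvPolynomial.support_mul a b hd)
  rw [map_add]
  exact Nat.add_le_add (ha d1 h1) (hb d2 h2)

end Helpers

/-- The weight function giving total `y`-degree. -/
def wY (n m : ℕ) : Fin (n + m) → ℕ := fun j => if (j : ℕ) < n then 0 else 1

section EvalY0

variable {K : Type*} [CommRing K] {n m : ℕ}

lemma wY_weight_eq_zero_iff (d : Fin (n + m) →₀ ℕ) :
    weight (wY n m) d = 0 ↔ ∀ j : Fin (n + m), ¬ ((j : ℕ) < n) → d j = 0 := by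
  rw [weight_apply, Finsupp.sum]
  rw [Finset.sum_eq_zero_iff]
  constructor
  · intro h j hj
    by_contra hd
    have hmem : j ∈ d.support := Finsupp.mem_support_iff.mpr hd
    have := h j hmem
    simp only [wY, if_neg hj, smul_eq_mul, mul_one] at this
    exact hd this
  · intro h j hj
    by_cases hjn : (j : ℕ) < n
    · simp [wY, hjn]
    · simp [h j hjn]

lemma evalY0_eq_wcomp (p : MvPolynomial (Fin (n + m)) K) :
    evalY0 K n m p = weightedHomogeneousComponent (wY n m) 0 p := by
  induction p using MvPolynomial.induction_on' with
  | monomial d r =>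
    by_cases hd : ∀ j : Fin (n + m), ¬ ((j : ℕ) < n) → d j = 0
    · have hw : weight (wY n m) d = 0 := (wY_weight_eq_zero_iff d).mpr hd
      rw [IsWeightedHomogeneous.weightedHomogeneousComponent_same
        (isWeightedHomogeneous_monomial _ d r hw)]
      rw [evalY0, aeval_monomial]
      rw [show (d.prod fun i k => (if (i : ℕ) < n then X i else 0) ^ k)
          = d.prod fun i k => (X i : MvPolynomial (Fin (n + m)) K) ^ k from
        Finsupp.prod_congr fun i hi => by
          rw [if_pos (by by_contra hc; exact Finsupp.mem_support_iff.mp hi (hd i hc))]]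
      rw [monomial_eq]
      rfl
    · push_neg at hd
      obtain ⟨j, hj, hdj⟩ := hd
      have hw : weight (wY n m) d ≠ 0 := fun h =>
        hdj ((wY_weight_eq_zero_iff d).mp h j (not_lt.mpr hj))
      rw [IsWeightedHomogeneous.weightedHomogeneousComponent_ne _
        (isWeightedHomogeneous_monomial _ d r rfl) (Ne.symm hw)]
      rw [evalY0, aeval_monomial]
      rw [Finsupp.prod, Finset.prod_eq_zero (Finsupp.mem_support_iff.mpr hdj)
        (by rw [if_neg (not_lt.mpr hj)]; exact zero_pow hdj)]
      rw [mul_zero]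
  | add p q hp hq => rw [map_add, map_add, hp, hq]

lemma weight_wY_le_degree (d : Fin (n + m) →₀ ℕ) :
    weight (wY n m) d ≤ weight (1 : Fin (n + m) → ℕ) d := by
  rw [weight_apply, weight_apply, Finsupp.sum, Finsupp.sum]
  refine Finset.sum_le_sum fun i _ => ?_
  simp only [wY, smul_eq_mul, Pi.one_apply, mul_one]
  split <;> omega

lemma sub_evalY0_min (b : MvPolynomial (Fin (n + m)) K) :
    ∀ d ∈ (b - evalY0 K n m b).support, 1 ≤ weight (wY n m) d := by
  intro d hd
  rw [MvPolynomial.mem_support_iff] at hd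
  by_contra h
  have hw : weight (wY n m) d = 0 := by omega
  apply hd
  have : coeff d (evalY0 K n m b) = coeff d b := by
    rw [evalY0_eq_wcomp, coeff_weightedHomogeneousComponent, if_pos hw]
  rw [coeff_sub, this, sub_self]

lemma inLastXY_zero (i : ℕ) : InLastXY (K := K) (n := n) (m := m) i 0 := by
  intro d hd; simp at hd

lemma inLastXY_of_support_subset {i : ℕ} {p q : MvPolynomial (Fin (n + m)) K}
    (hsub : q.support ⊆ p.support) (hp : InLastXY i p) : InLastXY i q :=
  fun d hd => hp d (hsub hd)

lemma inLastXY_add {i : ℕ} {p q : MvPolynomial (Fin (n + m)) K}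
    (hp : InLastXY i p) (hq : InLastXY i q) : InLastXY i (p + q) := by
  classical
  intro d hd
  rcases Finset.mem_union.mp (MvPolynomial.support_add hd) with h | h
  exacts [hp d h, hq d h]

lemma inLastXY_sum {i : ℕ} {α : Type*} {s : Finset α}
    {f : α → MvPolynomial (Fin (n + m)) K}
    (h : ∀ x ∈ s, InLastXY i (f x)) : InLastXY i (∑ x ∈ s, f x) := by
  classical
  induction s using Finset.induction_on with
  | empty => simpa using inLastXY_zero (K := K) (n := n) (m := m) i
  | insert _ _ hx ih =>
    rw [Finset.sum_insert hx]
    exact inLastXY_add (h _ (Finset.mem_insert_self _ _))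
      (ih fun x hxs => h x (Finset.mem_insert_of_mem hxs))

end EvalY0

section Key

variable {K : Type*} [CommRing K] {n m N : ℕ}

lemma stanley_key (lvl : Fin N → ℕ) (deg : Fin N → ℕ)
    (b : Fin N → MvPolynomial (Fin (n + m)) K)
    (hhom : ∀ j, (b j).IsWeightedHomogeneous 1 (deg j))
    (hgen0 : ∀ p : MvPolynomial (Fin (n + m)) K,
      ∃ c : Fin N → MvPolynomial (Fin (n + m)) K,
        (∀ j, InLastXY (K := K) (n := n) (m := m) (lvl j) (c j)) ∧
        p = ∑ j, c j * evalY0 K n m (b j)) :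
    ∀ (t k D : ℕ), D < k + t → ∀ p : MvPolynomial (Fin (n + m)) K,
      p.IsWeightedHomogeneous 1 D →
      (∀ d ∈ p.support, k ≤ weight (wY n m) d) →
      ∃ c : Fin N → MvPolynomial (Fin (n + m)) K,
        (∀ j, InLastXY (K := K) (n := n) (m := m) (lvl j) (c j)) ∧
        p = ∑ j, c j * b j := by
  intro t
  induction t with
  | zero =>
    intro k D hkD p hp hmin
    have hp0 : p = 0 := by
      rw [← MvPolynomial.support_eq_empty]
      by_contra h
      obtain ⟨d, hd⟩ := Finset.nonempty_iff_ne_empty.mpr h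
      have h1 := hmin d hd
      have h2 : weight (1 : Fin (n + m) → ℕ) d = D :=
        hp (MvPolynomial.mem_support_iff.mp hd)
      have h3 := weight_wY_le_degree d
      omega
    exact ⟨0, fun j => inLastXY_zero _, by simp [hp0]⟩
  | succ t ih =>
    intro k D hkD p hp hmin
    obtain ⟨c₀, hc₀, hp₀⟩ := hgen0 p
    have hβsupp : ∀ j, (evalY0 K n m (b j)).support ⊆ (b j).support := fun j => by
      rw [evalY0_eq_wcomp]
      exact support_wcomp_subset _ _ _
    have hβhom : ∀ j, (evalY0 K n m (b j)).IsWeightedHomogeneous 1 (deg j) :=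
      fun j => isWH_of_support_subset (hβsupp j) (hhom j)
    have hβ0 : ∀ j, (evalY0 K n m (b j)).IsWeightedHomogeneous (wY n m) 0 := fun j => by
      rw [evalY0_eq_wcomp]
      exact weightedHomogeneousComponent_isWeightedHomogeneous 0 _
    have hrmin : ∀ j, ∀ d ∈ (evalY0 K n m (b j) - b j).support,
        1 ≤ weight (wY n m) d := by
      intro j
      rw [show evalY0 K n m (b j) - b j = -(b j - evalY0 K n m (b j)) by ring,
        MvPolynomial.support_neg]
      exact sub_evalY0_min (b j)
    set c₁ : Fin N → MvPolynomial (Fin (n + m)) K := fun j => if deg j ≤ D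
      then weightedHomogeneousComponent 1 (D - deg j) (c₀ j) else 0 with hc₁
    have h1 : p = ∑ j, c₁ j * evalY0 K n m (b j) := by
      conv_lhs => rw [← IsWeightedHomogeneous.weightedHomogeneousComponent_same hp,
        hp₀, map_sum]
      refine Finset.sum_congr rfl fun j _ => ?_
      by_cases hdj : deg j ≤ D
      · rw [hc₁]; simp only [if_pos hdj]
        rw [show D = (D - deg j) + deg j by omega, wcomp_mul_wh (hβhom j)]
        rw [Nat.add_sub_cancel]
      · rw [hc₁]; simp only [if_neg hdj, zero_mul]
        exact wcomp_mul_wh_lt (hβhom j) _ (by omega)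
    set c₂ : Fin N → MvPolynomial (Fin (n + m)) K :=
      fun j => truncW (wY n m) k (c₁ j) with hc₂
    have h2 : p = ∑ j, c₂ j * evalY0 K n m (b j) := by
      conv_lhs => rw [← truncW_eq_self hmin, h1, map_sum]
      exact Finset.sum_congr rfl fun j _ => truncW_mul_wh0 (hβ0 j) _ k
    have hc₂sub : ∀ j, (c₂ j).support ⊆ (c₀ j).support := by
      intro j
      refine (support_truncW_subset _ _ _).trans ?_
      by_cases hdj : deg j ≤ D
      · simp only [hc₁, if_pos hdj]
        exact support_wcomp_subset _ _ _
      · simp only [hc₁, if_neg hdj]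
        simp
    have hc₂InL : ∀ j, InLastXY (K := K) (n := n) (m := m) (lvl j) (c₂ j) :=
      fun j => inLastXY_of_support_subset (hc₂sub j) (hc₀ j)
    have hc₂min : ∀ j, ∀ d ∈ (c₂ j).support, k ≤ weight (wY n m) d :=
      fun j => minW_truncW _ _ _
    have hc₁hom : ∀ j, (c₁ j).IsWeightedHomogeneous 1 (D - deg j) := by
      intro j
      by_cases hdj : deg j ≤ D
      · simp only [hc₁, if_pos hdj]
        exact weightedHomogeneousComponent_isWeightedHomogeneous _ _
      · simp only [hc₁, if_neg hdj]
        exact isWeightedHomogeneous_zero _ _ _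
    have hc₂hom : ∀ j, (c₂ j).IsWeightedHomogeneous 1 (D - deg j) :=
      fun j => isWH_of_support_subset (support_truncW_subset _ _ _) (hc₁hom j)
    have hc₂zero : ∀ j, D < deg j → c₂ j = 0 := by
      intro j hdj
      have : c₁ j = 0 := by rw [hc₁]; simp [Nat.not_le.mpr hdj]
      rw [hc₂]
      simp only
      rw [this, map_zero]
    have hrhom : ∀ j, (evalY0 K n m (b j) - b j).IsWeightedHomogeneous 1 (deg j) := by
      intro j
      rw [← mem_weightedHomogeneousSubmodule]
      exact Submodule.sub_mem _ ((mem_weightedHomogeneousSubmodule _ _ _ _).mpr (hβhom j))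
        ((mem_weightedHomogeneousSubmodule _ _ _ _).mpr (hhom j))
    have hterm : ∀ j, (c₂ j * (evalY0 K n m (b j) - b j)).IsWeightedHomogeneous 1 D := by
      intro j
      by_cases hdj : deg j ≤ D
      · have := (hc₂hom j).mul (hrhom j)
        rwa [Nat.sub_add_cancel hdj] at this
      · rw [hc₂zero j (by omega), zero_mul]
        exact isWeightedHomogeneous_zero _ _ _
    set q : MvPolynomial (Fin (n + m)) K :=
      ∑ j, c₂ j * (evalY0 K n m (b j) - b j) with hqdef
    have hq : p - ∑ j, c₂ j * b j = q := by
      rw [hqdef]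
      conv_lhs => rw [h2]
      rw [← Finset.sum_sub_distrib]
      exact Finset.sum_congr rfl fun j _ => (mul_sub _ _ _).symm
    have hqhom : q.IsWeightedHomogeneous 1 D := by
      rw [← mem_weightedHomogeneousSubmodule, hqdef]
      exact Submodule.sum_mem _ fun j _ =>
        (mem_weightedHomogeneousSubmodule _ _ _ _).mpr (hterm j)
    have hqmin : ∀ d ∈ q.support, k + 1 ≤ weight (wY n m) d := by
      intro d hd
      rw [MvPolynomial.mem_support_iff, hqdef, coeff_sum] at hd
      have : ∃ j, coeff d (c₂ j * (evalY0 K n m (b j) - b j)) ≠ 0 := by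
        by_contra hall
        push_neg at hall
        exact hd (Finset.sum_eq_zero fun j _ => hall j)
      obtain ⟨j, hj⟩ := this
      exact minW_mul (hc₂min j) (hrmin j) d (MvPolynomial.mem_support_iff.mpr hj)
    obtain ⟨c₃, hc₃, hq3⟩ := ih (k + 1) D (by omega) q hqhom hqmin
    refine ⟨fun j => c₂ j + c₃ j, fun j => inLastXY_add (hc₂InL j) (hc₃ j), ?_⟩
    have hsplit : ∑ j, (c₂ j + c₃ j) * b j = (∑ j, c₂ j * b j) + ∑ j, c₃ j * b j := by
      rw [← Finset.sum_add_distrib]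
      exact Finset.sum_congr rfl fun j _ => add_mul _ _ _
    rw [hsplit, ← hq3, ← hq]
    ring

end Key

/-- **Lifting a Stanley basis to extra variables.**  Let
`R_{n+m} = K[x_1,…,x_n,y_1,…,y_m]` with its standard grading, and let `b_j` be
homogeneous of degree `deg j` with `deg(b_j) = deg(b_j(x,0))` (i.e.
`b_j(x,0) ≠ 0`).  If the specializations `b_j(x,0)` form a basis of `R_{n+m}`
over `(R_{i+m})_{i=0}^n`, then the `b_j` themselves form a basis of `R_{n+m}`
over `(R_{i+m})_{i=0}^n`. -/
theorem stanley_basis_lift {K : Type*} [CommRing K] {n m N : ℕ}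
    (lvl : Fin N → ℕ) (hlvl : ∀ j, lvl j ≤ n)
    (deg : Fin N → ℕ)
    (b : Fin N → MvPolynomial (Fin (n + m)) K)
    (hhom : ∀ j, (b j).IsHomogeneous (deg j))
    (hev : ∀ j, evalY0 K n m (b j) ≠ 0)
    -- `{b_j(x,0)}` is a basis of `R_{n+m}` over `(R_{i+m})_{i=0}^n`:
    (hgen0 : ∀ p : MvPolynomial (Fin (n + m)) K,
      ∃ c : Fin N → MvPolynomial (Fin (n + m)) K,
        (∀ j, InLastXY (K := K) (n := n) (m := m) (lvl j) (c j)) ∧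
        p = ∑ j, c j * evalY0 K n m (b j))
    (hind0 : ∀ c : Fin N → MvPolynomial (Fin (n + m)) K,
      (∀ j, InLastXY (K := K) (n := n) (m := m) (lvl j) (c j)) →
      ∑ j, c j * evalY0 K n m (b j) = 0 → ∀ j, c j = 0) :
    (∀ p : MvPolynomial (Fin (n + m)) K,
      ∃ c : Fin N → MvPolynomial (Fin (n + m)) K,
        (∀ j, InLastXY (K := K) (n := n) (m := m) (lvl j) (c j)) ∧
        p = ∑ j, c j * b j) ∧
    (∀ c : Fin N → MvPolynomial (Fin (n + m)) K,
      (∀ j, InLastXY (K := K) (n := n) (m := m) (lvl j) (c j)) →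
      ∑ j, c j * b j = 0 → ∀ j, c j = 0) := by
  have hhom' : ∀ j, (b j).IsWeightedHomogeneous 1 (deg j) := hhom
  constructor
  · -- generation
    intro p
    have hcomp : ∀ i : ℕ, ∃ c : Fin N → MvPolynomial (Fin (n + m)) K,
        (∀ j, InLastXY (K := K) (n := n) (m := m) (lvl j) (c j)) ∧
        weightedHomogeneousComponent 1 i p = ∑ j, c j * b j := by
      intro i
      exact stanley_key lvl deg b hhom' hgen0 (i + 1) 0 i (by omega) _
        (weightedHomogeneousComponent_isWeightedHomogeneous i p)
        (fun d _ => Nat.zero_le _)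
    choose f hf1 hf2 using hcomp
    refine ⟨fun j => ∑ i ∈ Finset.range (p.totalDegree + 1), f i j,
      fun j => inLastXY_sum fun i _ => hf1 i j, ?_⟩
    have hps : p = ∑ i ∈ Finset.range (p.totalDegree + 1),
        weightedHomogeneousComponent 1 i p := (sum_homogeneousComponent p).symm
    conv_lhs => rw [hps]
    rw [Finset.sum_congr rfl fun i _ => hf2 i]
    rw [Finset.sum_comm]
    exact Finset.sum_congr rfl fun j _ => (Finset.sum_mul _ _ _).symm
  · -- independence
    intro c hc hsum
    have hβ0 : ∀ j, (evalY0 K n m (b j)).IsWeightedHomogeneous (wY n m) 0 := fun j => by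
      rw [evalY0_eq_wcomp]
      exact weightedHomogeneousComponent_isWeightedHomogeneous 0 _
    have main : ∀ t : ℕ, ∀ j, weightedHomogeneousComponent (wY n m) t (c j) = 0 := by
      intro t
      induction t using Nat.strong_induction_on with
      | _ t ih =>
        have hcmin : ∀ j, ∀ d ∈ (c j).support, t ≤ weight (wY n m) d := by
          intro j d hd
          rw [MvPolynomial.mem_support_iff] at hd
          by_contra h
          apply hd
          have h0 := ih (weight (wY n m) d) (by omega) j
          have h1 := congrArg (coeff d) h0
          rwa [coeff_weightedHomogeneousComponent, if_pos rfl, coeff_zero] at h1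
        have hkey : ∑ j, weightedHomogeneousComponent (wY n m) t (c j)
            * evalY0 K n m (b j) = 0 := by
          have h0 : weightedHomogeneousComponent (wY n m) t (∑ j, c j * b j) = 0 := by
            rw [hsum, map_zero]
          rw [map_sum] at h0
          rw [← h0]
          refine Finset.sum_congr rfl fun j _ => ?_
          have hsplit : c j * b j = c j * evalY0 K n m (b j)
              + c j * (b j - evalY0 K n m (b j)) := by ring
          rw [hsplit, map_add]
          have e1 : weightedHomogeneousComponent (wY n m) t
              (c j * evalY0 K n m (b j))
              = weightedHomogeneousComponent (wY n m) t (c j) * evalY0 K n m (b j) := by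
            have := wcomp_mul_wh (hβ0 j) (c j) t
            rwa [add_zero] at this
          have e2 : weightedHomogeneousComponent (wY n m) t
              (c j * (b j - evalY0 K n m (b j))) = 0 := by
            refine weightedHomogeneousComponent_eq_zero' _ _ fun d hd => ?_
            have := minW_mul (hcmin j) (sub_evalY0_min (b j)) d hd
            omega
          rw [e1, e2, add_zero]
        exact hind0 _ (fun j => inLastXY_of_support_subset
          (support_wcomp_subset _ _ _) (hc j)) hkey
    intro j
    ext d
    have := congrArg (coeff d) (main (weight (wY n m) d) j)
    rwa [coeff_weightedHomogeneousComponent, if_pos rfl, coeff_zero] at this
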